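/- Let A be a commutative ring, D : A → A a derivation (an additive map satisfying the Leibniz rule D(xy) = x·D(y) + D(x)·y), κ a natural number, c ∈ A, and (a_i)_{i ∈ I}, (b_i)_{i ∈ I} finite families of elements of A with Σ_i a_i·b_i = c. If Σ_i D^k(a_i)·b_i = 0 for every k with 1 ≤ k ≤ κ, then Σ_i a_i·D^k(b_i) = D^k(c) for every k with 0 ≤ k ≤ κ. -/

import Mathlib

/-- Reduction of the tangency equations: if `D` is a derivation on a commutative ring
`A`, `Σ_i a_i b_i = c`, and `Σ_i D^k(a_i)·b_i = 0` for `1 ≤ k ≤ κ`, then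
`Σ_i a_i·D^k(b_i) = D^k(c)` for all `0 ≤ k ≤ κ`. -/
theorem tangency_system_reduction {A : Type*} [CommRing A] (D : A → A)
    (hadd : ∀ x y : A, D (x + y) = D x + D y)
    (hleib : ∀ x y : A, D (x * y) = x * D y + D x * y)
    {I : Type*} [Fintype I] (κ : ℕ) (c : A) (a b : I → A)
    (hc : ∑ i, a i * b i = c)
    (h : ∀ k : ℕ, 1 ≤ k → k ≤ κ → ∑ i, D^[k] (a i) * b i = 0) :
    ∀ k : ℕ, k ≤ κ → ∑ i, a i * D^[k] (b i) = D^[k] c := by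
  have hD0 : D 0 = 0 := by
    have h0 := hadd 0 0
    simp only [add_zero] at h0
    exact (left_eq_add.mp h0)
  have hDsum : ∀ (s : Finset I) (f : I → A), D (∑ i ∈ s, f i) = ∑ i ∈ s, D (f i) := by
    intro s f
    induction s using Finset.cons_induction with
    | empty => simpa using hD0
    | cons x s hx ih =>
      rw [Finset.sum_cons, Finset.sum_cons, hadd, ih]
  have key : ∀ m j : ℕ, 1 ≤ j → j + m ≤ κ → ∑ i, D^[j] (a i) * D^[m] (b i) = 0 := by
    intro m
    induction m with
    | zero => intro j hj1 hjκ; simpa using h j hj1 (by simpa using hjκ)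
    | succ m ih =>
      intro j hj1 hjκ
      have h1 : ∑ i, D^[j] (a i) * D^[m] (b i) = 0 := ih j hj1 (by omega)
      have h2 : ∑ i, D^[j+1] (a i) * D^[m] (b i) = 0 := ih (j+1) (by omega) (by omega)
      have hD : D (∑ i, D^[j] (a i) * D^[m] (b i)) =
          (∑ i, D^[j] (a i) * D^[m+1] (b i)) + ∑ i, D^[j+1] (a i) * D^[m] (b i) := by
        rw [hDsum, ← Finset.sum_add_distrib]
        refine Finset.sum_congr rfl fun i _ => ?_
        rw [hleib]
        simp [Function.iterate_succ_apply']
      rw [h1, hD0, h2, add_zero] at hD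
      exact hD.symm
  intro k
  induction k with
  | zero => intro _; simpa using hc
  | succ k ih =>
    intro hk
    have hkk : k ≤ κ := by omega
    have h1 : ∑ i, D^[1] (a i) * D^[k] (b i) = 0 := key k 1 le_rfl (by omega)
    have hD : D (∑ i, a i * D^[k] (b i)) =
        (∑ i, a i * D^[k+1] (b i)) + ∑ i, D^[1] (a i) * D^[k] (b i) := by
      rw [hDsum, ← Finset.sum_add_distrib]
      refine Finset.sum_congr rfl fun i _ => ?_
      rw [hleib]
      simp [Function.iterate_succ_apply']
    rw [ih hkk] at hD
    rw [h1, add_zero] at hD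
    rw [Function.iterate_succ_apply' D k c, hD]
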